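/- Let R = C⁰_{b,D,<∞}(D) for D = [a,b] with a < b. Let I be an ideal of R such that every f ∈ I with f(x) ≠ 0 for all x ∈ D is a unit of R. Then I = R if and only if the intersection over all f ∈ I of the closures (in D) of the zero sets Z(f) = {x ∈ D : f(x) = 0} is empty. -/

import Mathlib

open Set Filter Topology

/-- The ℝ-subalgebra of the product ring `W → ℝ` consisting of all bounded
functions with finitely many discontinuity points. -/
def pcAlg (W : Type*) [TopologicalSpace W] : Subalgebra ℝ (W → ℝ) where
  carrier := {f | (∃ C, ∀ x, |f x| ≤ C) ∧ {x | ¬ ContinuousAt f x}.Finite}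
  add_mem' := by
    rintro f g ⟨⟨Cf, hCf⟩, hf⟩ ⟨⟨Cg, hCg⟩, hg⟩
    refine ⟨⟨Cf + Cg, fun x => ?_⟩, (hf.union hg).subset fun x hx => ?_⟩
    · exact (abs_add_le _ _).trans (add_le_add (hCf x) (hCg x))
    · simp only [mem_union, mem_setOf_eq] at hx ⊢
      by_contra h
      push_neg at h
      exact hx (h.1.add h.2)
  mul_mem' := by
    rintro f g ⟨⟨Cf, hCf⟩, hf⟩ ⟨⟨Cg, hCg⟩, hg⟩
    refine ⟨⟨max Cf 0 * max Cg 0, fun x => ?_⟩, (hf.union hg).subset fun x hx => ?_⟩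
    · rw [Pi.mul_apply, abs_mul]
      exact mul_le_mul ((hCf x).trans (le_max_left _ _)) ((hCg x).trans (le_max_left _ _))
        (abs_nonneg _) (le_max_right _ _)
    · simp only [mem_union, mem_setOf_eq] at hx ⊢
      by_contra h
      push_neg at h
      exact hx (h.1.mul h.2)
  algebraMap_mem' := fun r => by
    refine ⟨⟨|r|, fun x => le_of_eq rfl⟩, Set.finite_empty.subset fun x hx => ?_⟩
    exact absurd continuousAt_const hx

/-- Let `I` be an ideal of `R = C⁰_{b,D,<∞}(D)` such that every `f ∈ I` which is
nowhere zero is a unit.  Then `I = R` iff the intersection of the closures of the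
zero sets of the members of `I` is empty. -/
theorem pcAlg_ideal_eq_top_iff_iInter_closure_zeroSet_empty (a b : ℝ) (hab : a < b)
    (I : Ideal ↥(pcAlg ↥(Set.Icc a b)))
    (hNI : ∀ f ∈ I, (∀ x : ↥(Set.Icc a b), f.1 x ≠ 0) → IsUnit f) :
    I = ⊤ ↔ (⋂ f ∈ I, closure {x : ↥(Set.Icc a b) | f.1 x = 0}) = ∅ := by
  constructor
  · rintro rfl
    rw [Set.eq_empty_iff_forall_notMem]
    intro x hx
    have h1 := Set.mem_iInter₂.mp hx 1 Submodule.mem_top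
    have hz : {y : ↥(Set.Icc a b) | (1 : ↥(pcAlg ↥(Set.Icc a b))).1 y = 0} = ∅ := by
      ext y
      simp
    rw [hz, closure_empty] at h1
    exact h1
  · intro h
    have hEmpty : (Set.univ : Set ↥(Set.Icc a b)) ∩
        ⋂ i : I, closure {x : ↥(Set.Icc a b) | (i : ↥(pcAlg ↥(Set.Icc a b))).1 x = 0} = ∅ := by
      rw [Set.univ_inter, ← h]
      ext x
      simp only [Set.mem_iInter, SetLike.mem_coe]
      exact ⟨fun hx f hf => hx ⟨f, hf⟩, fun hx i => hx i.1 i.2⟩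
    obtain ⟨t, ht⟩ := isCompact_univ.elim_finite_subfamily_closed _
      (fun i : I => isClosed_closure) hEmpty
    rw [Set.univ_inter] at ht
    set g : ↥(pcAlg ↥(Set.Icc a b)) := ∑ i ∈ t, (i : ↥(pcAlg ↥(Set.Icc a b))) * i with hg
    have hgI : g ∈ I := Submodule.sum_mem I fun i _ => I.mul_mem_left _ i.2
    have hgx : ∀ x : ↥(Set.Icc a b), g.1 x ≠ 0 := by
      intro x hx0
      have hcoe : g.1 x = ∑ i ∈ t, ((i : ↥(pcAlg ↥(Set.Icc a b))).1 x *
          (i : ↥(pcAlg ↥(Set.Icc a b))).1 x) := by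
        rw [hg]
        push_cast
        simp [Finset.sum_apply]
      rw [hcoe] at hx0
      have hall := (Finset.sum_eq_zero_iff_of_nonneg
        (fun i _ => mul_self_nonneg _)).mp hx0
      have hxI : x ∈ ⋂ i ∈ t, closure {y : ↥(Set.Icc a b) |
          (i : ↥(pcAlg ↥(Set.Icc a b))).1 y = 0} := by
        refine Set.mem_iInter₂.mpr fun i hi => subset_closure ?_
        exact mul_self_eq_zero.mp (hall i hi)
      rw [ht] at hxI
      exact hxI
    exact I.eq_top_of_isUnit_mem hgI (hNI g hgI hgx)
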